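/- arXiv:1406.6554 — 2 statements merged into one kernel-verified Lean document; each statement's English description precedes it below -/
import Mathlib

section
/- Let k ⊆ K be an algebraic extension of fields, let (B, m_B) be a discrete valuation ring whose field of fractions is K, and set A = B ∩ k and m_A = m_B ∩ k. Then A is a discrete valuation ring with maximal ideal m_A whose field of fractions is k. -/
open IsDedekindDomain IsLocalRing Multiplicative

local notation "ℤₘ₀" => WithZero (Multiplicative ℤ)


/-- The intersection `A = B ∩ k`, as a subring of `k`, where `k ⊆ K` is a field extension
(via `algebraMap k K`) and `B` is a subring of `K`. -/
def capSubring {k K : Type*} [Field k] [Field K] [Algebra k K] (B : Subring K) : Subring k :=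
  B.comap (algebraMap k K)

/-- The natural ring homomorphism `A = B ∩ k → B` induced by the inclusion `k ⊆ K`. -/
def capHom {k K : Type*} [Field k] [Field K] [Algebra k K] (B : Subring K) :
    capSubring (k := k) B →+* B :=
  (algebraMap k K).restrict (capSubring (k := k) B) B fun _ hx => hx

section Aux
variable {k K : Type*} [Field k] [Field K] [Algebra k K] (B : Subring K)
  [IsDiscreteValuationRing B] [IsFractionRing B K]

/-- The maximal ideal of `B` as a height-one prime. -/
def htsAux : HeightOneSpectrum B :=
  ⟨maximalIdeal B, Ideal.IsMaximal.isPrime inferInstance, IsDiscreteValuationRing.not_a_field B⟩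

/-- The `ℤₘ₀`-valued valuation on `K` attached to `B`. -/
noncomputable def bvalAux : Valuation K ℤₘ₀ := (htsAux B).valuation K

lemma memOrInvMemAux (x : K) : x ∈ B ∨ x⁻¹ ∈ B := by
  rcases (ValuationRing.iff_isInteger_or_isInteger B K).mp inferInstance x with ⟨b, hb⟩ | ⟨b, hb⟩
  · exact Or.inl (hb ▸ b.2)
  · exact Or.inr (hb ▸ b.2)

lemma memIffBvalAux (x : K) : x ∈ B ↔ bvalAux B x ≤ 1 := by
  constructor
  · intro hx
    exact (htsAux B).valuation_le_one (K := K) (⟨x, hx⟩ : B)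
  · intro hx
    rcases eq_or_ne x 0 with rfl | hx0
    · exact B.zero_mem
    rcases memOrInvMemAux B x with h | h
    · exact h
    · have h1 : bvalAux B x * bvalAux B x⁻¹ = 1 := by
        rw [← map_mul, mul_inv_cancel₀ hx0, map_one]
      have hinv_le : bvalAux B x⁻¹ ≤ 1 := by
        exact (htsAux B).valuation_le_one (K := K) (⟨x⁻¹, h⟩ : B)
      have hinv : bvalAux B x⁻¹ = 1 := by
        refine le_antisymm hinv_le ?_
        calc (1 : ℤₘ₀) = bvalAux B x * bvalAux B x⁻¹ := h1.symm
        _ ≤ 1 * bvalAux B x⁻¹ := mul_le_mul_left hx _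
        _ = bvalAux B x⁻¹ := one_mul _
      -- the element ⟨x⁻¹, h⟩ is a unit of B
      have hint : (htsAux B).intValuation (⟨x⁻¹, h⟩ : B) = 1 := by
        have := (htsAux B).valuation_of_algebraMap (K := K) (⟨x⁻¹, h⟩ : B)
        rw [← this]; exact hinv
      have hnm : (⟨x⁻¹, h⟩ : B) ∉ maximalIdeal B := by
        intro hmem
        have hlt : (htsAux B).intValuationDef (⟨x⁻¹, h⟩ : B) < 1 := by
          rw [show (htsAux B).intValuationDef (⟨x⁻¹, h⟩ : B) = (htsAux B).intValuation ⟨x⁻¹, h⟩ from rfl, (htsAux B).intValuation_lt_one_iff_dvd]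
          exact Ideal.dvd_iff_le.mpr ((Ideal.span_singleton_le_iff_mem _).mpr hmem)
        rw [show (htsAux B).intValuationDef (⟨x⁻¹, h⟩ : B) = (htsAux B).intValuation ⟨x⁻¹, h⟩ from rfl, hint] at hlt
        exact lt_irrefl _ hlt
      have hu : IsUnit (⟨x⁻¹, h⟩ : B) := by
        by_contra hnu
        exact hnm (mem_maximalIdeal _ |>.mpr hnu)
      obtain ⟨c, hc⟩ := hu.exists_right_inv
      have h2 : (x⁻¹) * (c : K) = 1 := by simpa using congrArg (Subtype.val) hc
      rw [inv_mul_eq_one₀ hx0] at h2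
      exact h2 ▸ c.2
end Aux

section Aux2
variable {k K : Type*} [Field k] [Field K] [Algebra k K] (B : Subring K)
  [IsDiscreteValuationRing B] [IsFractionRing B K]

lemma existsNotinAux [Algebra.IsAlgebraic k K] : ∃ x : k, algebraMap k K x ∉ B := by
  by_contra h
  push_neg at h
  have hB : ∀ y : K, y ∈ B := by
    intro y
    have hy : IsIntegral k y := (Algebra.IsAlgebraic.isAlgebraic (R := k) y).isIntegral
    obtain ⟨p, pm, pe⟩ := hy
    have hint : IsIntegral B y := by
      refine ⟨p.map ((algebraMap k K).codRestrict B h), pm.map _, ?_⟩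
      rw [Polynomial.eval₂_map]
      have : (algebraMap (↥B) K).comp ((algebraMap k K).codRestrict B h) = algebraMap k K :=
        RingHom.ext fun x => rfl
      rw [this]
      exact pe
    obtain ⟨b, hb⟩ := IsIntegrallyClosed.isIntegral_iff.mp hint
    exact hb ▸ b.2
  refine IsDiscreteValuationRing.not_isField B ⟨⟨0, 1, zero_ne_one⟩, mul_comm, ?_⟩
  intro a ha
  have ha0 : (a : K) ≠ 0 := fun hc => ha (Subtype.ext hc)
  exact ⟨⟨(a : K)⁻¹, hB _⟩, Subtype.ext (mul_inv_cancel₀ ha0)⟩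

lemma memCapIffAux (x : k) : x ∈ capSubring (k := k) B ↔ bvalAux B (algebraMap k K x) ≤ 1 :=
  memIffBvalAux B _

lemma oneLeAntisymmAux {u v : ℤₘ₀} (hu : u ≤ 1) (hv : v ≤ 1) (huv : u * v = 1) : u = 1 := by
  refine le_antisymm hu ?_
  calc (1 : ℤₘ₀) = u * v := huv.symm
  _ ≤ u * 1 := mul_le_mul_right hv u
  _ = u := mul_one u

lemma isUnitIffAux (a : capSubring (k := k) B) :
    IsUnit a ↔ bvalAux B (algebraMap k K a.val) = 1 := by
  constructor
  · intro ha
    obtain ⟨c, hc⟩ := ha.exists_right_inv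
    have h1 : bvalAux B (algebraMap k K a.val) * bvalAux B (algebraMap k K c.val) = 1 := by
      rw [← map_mul, ← map_mul]
      have : a.val * c.val = 1 := by exact_mod_cast congrArg Subtype.val hc
      rw [this, map_one, map_one]
    exact oneLeAntisymmAux ((memCapIffAux B _).mp a.2) ((memCapIffAux B _).mp c.2) h1
  · intro hval
    have ha0 : a.val ≠ 0 := by
      intro hc
      rw [hc, map_zero, map_zero] at hval
      exact zero_ne_one hval
    have hinv : a.val⁻¹ ∈ capSubring (k := k) B := by
      rw [memCapIffAux, map_inv₀, map_inv₀, hval]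
      exact le_refl 1
    exact IsUnit.of_mul_eq_one (a := a) ⟨a.val⁻¹, hinv⟩ (Subtype.ext (mul_inv_cancel₀ ha0))

end Aux2


/-- Let `k ⊆ K` be an algebraic extension of fields, let `(B, m_B)` be a discrete valuation
ring whose field of fractions is `K`, and set `A = B ∩ k` and `m_A = m_B ∩ k`. Then `A` is a
discrete valuation ring with maximal ideal `m_A` (i.e. the nonunits of `A` are exactly the
elements mapping into `m_B`) whose field of fractions is `k`. -/
theorem stmt_0 {k K : Type*} [Field k] [Field K] [Algebra k K] [Algebra.IsAlgebraic k K]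
    (B : Subring K) [IsDiscreteValuationRing B] [IsFractionRing B K] :
    IsDiscreteValuationRing (capSubring (k := k) B) ∧
    IsFractionRing (capSubring (k := k) B) k ∧
    ∀ a : capSubring (k := k) B,
      a ∈ nonunits (capSubring (k := k) B) ↔ capHom B a ∈ IsLocalRing.maximalIdeal B := by
  -- abbreviations
  have hcoe_le : ∀ n : ℤ, ((Multiplicative.ofAdd n : Multiplicative ℤ) : ℤₘ₀) ≤ 1 ↔ n ≤ 0 := by
    intro n
    rw [← WithZero.coe_one, WithZero.coe_le_coe, ← ofAdd_zero, Multiplicative.ofAdd_le]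
  have hcoe_eq : ∀ n : ℤ, ((Multiplicative.ofAdd n : Multiplicative ℤ) : ℤₘ₀) = 1 ↔ n = 0 := by
    intro n
    rw [← WithZero.coe_one, WithZero.coe_inj, ← ofAdd_zero]
    exact ⟨fun h => Multiplicative.ofAdd.injective h, fun h => h ▸ rfl⟩
  have hcoe_mul : ∀ a b : ℤ, ((Multiplicative.ofAdd a : Multiplicative ℤ) : ℤₘ₀) *
      ((Multiplicative.ofAdd b : Multiplicative ℤ) : ℤₘ₀) = ((Multiplicative.ofAdd (a+b) : Multiplicative ℤ) : ℤₘ₀) := by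
    intro a b
    rw [← WithZero.coe_mul, ← ofAdd_add]
  -- the value subgroup
  let Γ : AddSubgroup ℤ :=
    { carrier := {n : ℤ | ∃ x : k, x ≠ 0 ∧ bvalAux B (algebraMap k K x) = Multiplicative.ofAdd n}
      zero_mem' := ⟨1, one_ne_zero, by simp⟩
      add_mem' := by
        rintro a b ⟨x, hx, hvx⟩ ⟨y, hy, hvy⟩
        exact ⟨x * y, mul_ne_zero hx hy, by rw [map_mul, map_mul, hvx, hvy, hcoe_mul]⟩
      neg_mem' := by
        rintro a ⟨x, hx, hvx⟩
        refine ⟨x⁻¹, inv_ne_zero hx, ?_⟩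
        rw [map_inv₀, map_inv₀, hvx, ← WithZero.coe_inv, ← ofAdd_neg] }
  have hΓmem : ∀ n : ℤ, n ∈ Γ ↔
      ∃ x : k, x ≠ 0 ∧ bvalAux B (algebraMap k K x) = Multiplicative.ofAdd n := fun n => Iff.rfl
  have hval : ∀ x : k, x ≠ 0 → ∃ n : ℤ, n ∈ Γ ∧
      bvalAux B (algebraMap k K x) = Multiplicative.ofAdd n := by
    intro x hx
    have h0 : bvalAux B (algebraMap k K x) ≠ 0 :=
      (Valuation.ne_zero_iff _).mpr ((map_ne_zero _).mpr hx)
    obtain ⟨γ, hγ⟩ := WithZero.ne_zero_iff_exists.mp h0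
    exact ⟨γ.toAdd, ⟨x, hx, hγ.symm⟩, hγ.symm⟩
  -- nontriviality
  obtain ⟨x₀, hx₀⟩ := existsNotinAux (k := k) B
  have hx₀0 : x₀ ≠ 0 := by
    rintro rfl
    exact hx₀ (by rw [map_zero]; exact B.zero_mem)
  obtain ⟨n₀, hn₀Γ, hn₀⟩ := hval x₀ hx₀0
  have hn₀pos : 0 < n₀ := by
    by_contra h
    push_neg at h
    exact hx₀ ((memIffBvalAux B _).mpr (by rw [hn₀]; exact (hcoe_le n₀).mpr h))
  -- generator
  obtain ⟨g, hg⟩ := Int.subgroup_cyclic Γ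
  have hmulg : ∀ n ∈ Γ, ∃ m : ℤ, n = m * g := by
    intro n hn
    rw [hg, AddSubgroup.mem_closure_singleton] at hn
    obtain ⟨m, hm⟩ := hn
    exact ⟨m, by rw [← hm, smul_eq_mul]⟩
  have hg0 : g ≠ 0 := by
    rintro rfl
    obtain ⟨m, hm⟩ := hmulg n₀ hn₀Γ
    omega
  have hgΓ : g ∈ Γ := hg ▸ AddSubgroup.subset_closure (Set.mem_singleton g)
  set e : ℤ := -|g| with he_def
  have he_neg : e < 0 := neg_neg_iff_pos.mpr (abs_pos.mpr hg0)
  have heΓ : e ∈ Γ := by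
    rcases abs_choice g with h | h
    · rw [he_def, h]; exact Γ.neg_mem hgΓ
    · rw [he_def, h, neg_neg]; exact hgΓ
  have hmule : ∀ n ∈ Γ, ∃ m : ℤ, n = m * e := by
    intro n hn
    obtain ⟨m, hm⟩ := hmulg n hn
    rcases abs_choice g with h | h
    · exact ⟨-m, by rw [hm, he_def, h]; ring⟩
    · exact ⟨m, by rw [hm, he_def, h]; ring⟩
  obtain ⟨π, hπ0, hπv⟩ := (hΓmem e).mp heΓ
  have hπA : π ∈ capSubring (k := k) B :=
    (memCapIffAux B π).mpr (by rw [hπv]; exact (hcoe_le e).mpr he_neg.le)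
  -- general: values of elements of A are nonpositive multiples of e
  have hvalA : ∀ a : capSubring (k := k) B, a.val ≠ 0 → ∃ m : ℤ, 0 ≤ m ∧
      bvalAux B (algebraMap k K a.val) = Multiplicative.ofAdd (m * e) := by
    intro a ha
    obtain ⟨n, hnΓ, hnv⟩ := hval a.val ha
    have hn0 : n ≤ 0 := (hcoe_le n).mp (hnv ▸ (memCapIffAux B _).mp a.2)
    obtain ⟨m, hm⟩ := hmule n hnΓ
    refine ⟨m, ?_, hm ▸ hnv⟩
    nlinarith
  -- factorization
  have hfac : ∀ a : capSubring (k := k) B, a.val ≠ 0 → ∃ (m : ℕ),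
      Associated ((⟨π, hπA⟩ : capSubring (k := k) B) ^ m) a := by
    intro a ha
    obtain ⟨m, hm0, hmv⟩ := hvalA a ha
    refine ⟨m.toNat, ?_⟩
    set u : k := a.val / π ^ m.toNat with hu_def
    have hπpow : bvalAux B (algebraMap k K (π ^ m.toNat)) =
        Multiplicative.ofAdd ((m.toNat : ℤ) * e) := by
      rw [map_pow, map_pow, hπv, ← WithZero.coe_pow, ← ofAdd_nsmul, nsmul_eq_mul]
    have huv : bvalAux B (algebraMap k K u) = 1 := by
      rw [hu_def, map_div₀, map_div₀, hmv, hπpow, Int.toNat_of_nonneg hm0,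
        ← WithZero.coe_div, ← ofAdd_sub, sub_self, ofAdd_zero, WithZero.coe_one]
    have huA : u ∈ capSubring (k := k) B := (memCapIffAux B u).mpr (le_of_eq huv)
    have huU : IsUnit (⟨u, huA⟩ : capSubring (k := k) B) := (isUnitIffAux B _).mpr huv
    refine ⟨huU.unit, ?_⟩
    rw [IsUnit.unit_spec]
    refine Subtype.ext ?_
    show (π : k) ^ m.toNat * u = a.val
    rw [hu_def, mul_comm, div_mul_cancel₀ _ (pow_ne_zero _ hπ0)]
  -- DVR
  have hDVR : IsDiscreteValuationRing (capSubring (k := k) B) := by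
    apply IsDiscreteValuationRing.ofHasUnitMulPowIrreducibleFactorization
    refine ⟨⟨π, hπA⟩, ⟨?_, ?_⟩, fun {a} ha => hfac a fun hc => ha (Subtype.ext hc)⟩
    · intro hu
      have := (isUnitIffAux B _).mp hu
      rw [hπv, hcoe_eq] at this
      omega
    · rintro a b hab
      have habk : (π : k) = a.val * b.val := congrArg Subtype.val hab
      have ha0 : a.val ≠ 0 := fun hc => hπ0 (by rw [habk, hc, zero_mul])
      have hb0 : b.val ≠ 0 := fun hc => hπ0 (by rw [habk, hc, mul_zero])
      obtain ⟨ma, hma0, hmav⟩ := hvalA a ha0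
      obtain ⟨mb, hmb0, hmbv⟩ := hvalA b hb0
      have hsum : ma * e + mb * e = e := by
        have h1 : bvalAux B (algebraMap k K (a.val * b.val)) = Multiplicative.ofAdd (ma * e + mb * e) := by
          rw [map_mul, map_mul, hmav, hmbv, hcoe_mul]
        rw [← habk, hπv] at h1
        have := WithZero.coe_inj.mp h1
        exact (Multiplicative.ofAdd.injective this).symm
      have : ma = 0 ∨ mb = 0 := by
        have : (ma + mb) * e = 1 * e := by linear_combination hsum
        have hmm : ma + mb = 1 := mul_right_cancel₀ (by omega) this
        omega
      rcases this with h | h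
      · exact Or.inl ((isUnitIffAux B _).mpr (by rw [hmav, h, zero_mul, ofAdd_zero, WithZero.coe_one]))
      · exact Or.inr ((isUnitIffAux B _).mpr (by rw [hmbv, h, zero_mul, ofAdd_zero, WithZero.coe_one]))
  -- mem or inv mem for A
  have hmem_or : ∀ x : k, x ∈ capSubring (k := k) B ∨ x⁻¹ ∈ capSubring (k := k) B := by
    intro x
    rcases memOrInvMemAux B (algebraMap k K x) with h | h
    · exact Or.inl h
    · exact Or.inr (by rw [capSubring, Subring.mem_comap, map_inv₀]; exact h)
  -- fraction ring
  have hFR : IsFractionRing (capSubring (k := k) B) k := by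
    refine ⟨⟨?map_units', ?surj', ?exists_of_eq⟩⟩
    case map_units' =>
      rintro ⟨y, hy⟩
      exact (Units.mk0 (y.val : k) fun c => nonZeroDivisors.ne_zero hy (Subtype.ext c)).isUnit
    case surj' =>
      intro z
      by_cases h : z = 0
      · exact ⟨(0, 1), by simp [h]⟩
      rcases hmem_or z with hh | hh
      · exact ⟨(⟨z, hh⟩, 1), by simp; rfl⟩
      · refine ⟨(1, ⟨⟨z⁻¹, hh⟩, ?_⟩), ?_⟩
        · exact mem_nonZeroDivisors_iff_ne_zero.2 fun c => h (inv_eq_zero.mp (congrArg Subtype.val c))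
        · show z * z⁻¹ = _
          rw [mul_inv_cancel₀ h]; simp
    case exists_of_eq =>
      intro a b h
      exact ⟨1, by simpa using Subtype.ext (show (a : k) = b from h)⟩
  refine ⟨hDVR, hFR, ?_⟩
  -- maximal ideal
  intro a
  rw [IsLocalRing.mem_maximalIdeal, mem_nonunits_iff, mem_nonunits_iff, not_iff_not]
  constructor
  · intro h
    exact h.map (capHom B)
  · intro h
    obtain ⟨c, hc⟩ := h.exists_right_inv
    refine (isUnitIffAux B a).mpr ?_
    have hcK : algebraMap k K a.val * (c : K) = 1 := by
      exact (by simpa using congrArg Subtype.val hc : ((capHom B a : B) : K) * (c : K) = 1)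
    have h1 : bvalAux B (algebraMap k K a.val) * bvalAux B (c : K) = 1 := by
      rw [← map_mul, hcK, map_one]
    exact oneLeAntisymmAux ((memCapIffAux B _).mp a.2) ((memIffBvalAux B _).mp c.2) h1
end

section
/- Let k ⊆ K be an algebraic extension of fields, let (B, m_B) be a discrete valuation ring whose field of fractions is K, let ν : K → ℤ ∪ {∞} be the associated valuation, let b ∈ B, and let p = Tⁿ + r_{n−1} T^{n−1} + ⋯ + r_0 ∈ k[T] be a monic polynomial with p(b) = 0. Choose j ∈ {0, …, n−1} with ν(r_j) ≤ ν(r_i) for all i ∈ {0, …, n−1}. If ν(r_j) ≥ 0 then p has all coefficients in A = B ∩ k and the reduction of p modulo m_A = m_B ∩ k is a nonzero polynomial over A/m_A annihilating the class of b in B/m_B; if ν(r_j) < 0 then r_j^{-1} p has all coefficients in A and its reduction modulo m_A is a nonzero polynomial over A/m_A annihilating the class of b in B/m_B. -/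
set_option synthInstance.maxHeartbeats 400000


lemma wt_aux (a c : WithTop ℤ) (ha : a ≠ ⊤) (h : a ≤ c) : (0 : WithTop ℤ) ≤ -a + c := by
  lift a to ℤ using ha
  induction c using WithTop.recTopCoe with
  | top => simp
  | coe c =>
    rw [WithTop.coe_le_coe] at h
    rw [show -(a : WithTop ℤ) = ((-a : ℤ) : WithTop ℤ) from rfl, ← WithTop.coe_add,
      ← WithTop.coe_zero, WithTop.coe_le_coe]
    omega

lemma aux_exists {k K : Type*} [Field k] [Field K] [Algebra k K]
    (B : Subring K) [IsLocalRing B]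
    (q : Polynomial k) (hcoeff : ∀ i, algebraMap k K (q.coeff i) ∈ B)
    (b : B) (hqb : Polynomial.eval₂ (algebraMap k K) (b : K) q = 0)
    (m : ℕ) (hm : q.coeff m = 1) :
    ∃ pA : Polynomial (capSubring (k := k) B),
      pA.map (capSubring (k := k) B).subtype = q ∧
      pA.map (Ideal.Quotient.mk
        ((IsLocalRing.maximalIdeal B).comap (capHom (k := k) B))) ≠ 0 ∧
      Polynomial.eval₂
        (Ideal.quotientMap (IsLocalRing.maximalIdeal B) (capHom (k := k) B) le_rfl)
        (Ideal.Quotient.mk (IsLocalRing.maximalIdeal B) b)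
        (pA.map (Ideal.Quotient.mk
          ((IsLocalRing.maximalIdeal B).comap (capHom (k := k) B)))) = 0 := by
  have hsub : (↑q.coeffs : Set k) ⊆ capSubring (k := k) B := by
    intro a ha
    rw [Finset.mem_coe, Polynomial.mem_coeffs_iff] at ha
    obtain ⟨n, _, rfl⟩ := ha
    exact hcoeff n
  refine ⟨q.toSubring _ hsub, q.map_toSubring _ hsub, ?_, ?_⟩
  · -- nonzero: coefficient m is 1
    have hI : (IsLocalRing.maximalIdeal B).comap (capHom (k := k) B) ≠ ⊤ := by
      intro h
      have : (1 : capSubring (k := k) B) ∈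
          (IsLocalRing.maximalIdeal B).comap (capHom (k := k) B) := h ▸ trivial
      exact (IsLocalRing.maximalIdeal B).ne_top_iff_one.mp
        (Ideal.IsMaximal.ne_top inferInstance) (by simp at this)
    haveI := Ideal.Quotient.nontrivial_iff.mpr hI
    intro h0
    have : ((q.toSubring _ hsub).map (Ideal.Quotient.mk
        ((IsLocalRing.maximalIdeal B).comap (capHom (k := k) B)))).coeff m = 0 := by
      rw [h0]; simp
    rw [Polynomial.coeff_map] at this
    have hc1 : (q.toSubring _ hsub).coeff m = 1 := by
      apply Subtype.ext
      rw [Polynomial.coeff_toSubring' _ _ hsub, hm]; rfl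
    rw [hc1, map_one] at this
    exact one_ne_zero this
  · -- evaluation
    have key : Polynomial.eval₂ (capHom (k := k) B) b (q.toSubring _ hsub) = 0 := by
      apply Subtype.coe_injective
      have := Polynomial.hom_eval₂ (q.toSubring _ hsub) (capHom (k := k) B) B.subtype b
      rw [Subring.coe_subtype] at this
      calc ((Polynomial.eval₂ (capHom (k := k) B) b (q.toSubring _ hsub) : B) : K)
          = Polynomial.eval₂ (B.subtype.comp (capHom (k := k) B)) (b : K)
            (q.toSubring _ hsub) := this
        _ = Polynomial.eval₂ ((algebraMap k K).comp (capSubring (k := k) B).subtype) (b : K)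
            (q.toSubring _ hsub) := by rfl
        _ = Polynomial.eval₂ (algebraMap k K) (b : K)
            ((q.toSubring _ hsub).map (capSubring (k := k) B).subtype) := by
            rw [Polynomial.eval₂_map]
        _ = 0 := by rw [q.map_toSubring _ hsub]; exact hqb
    rw [Polynomial.eval₂_map, Ideal.quotientMap_comp_mk le_rfl,
      ← Polynomial.hom_eval₂, key, map_zero]

/-- Let `k ⊆ K` be an algebraic extension of fields, let `(B, m_B)` be a discrete valuation
ring whose field of fractions is `K`, and let `ν : K → ℤ ∪ {∞}` be the associated valuation
(so that `ν(x) ≥ 0 ↔ x ∈ B`). Let `b ∈ B` and let `p = Tⁿ + r_{n-1} T^{n-1} + ⋯ + r_0 ∈ k[T]`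
be a monic polynomial with `p(b) = 0`. Choose `j ∈ {0, …, n-1}` with `ν(r_j) ≤ ν(r_i)` for all
`i ∈ {0, …, n-1}`. If `ν(r_j) ≥ 0` then `p` has all coefficients in `A = B ∩ k` and the
reduction of `p` modulo `m_A = m_B ∩ k` is a nonzero polynomial over `A/m_A` annihilating the
class of `b` in `B/m_B`; if `ν(r_j) < 0` then `r_j⁻¹·p` has all coefficients in `A` and its
reduction modulo `m_A` is a nonzero polynomial over `A/m_A` annihilating the class of `b` in
`B/m_B`. -/
theorem stmt_4 {k K : Type*} [Field k] [Field K] [Algebra k K] [Algebra.IsAlgebraic k K]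
    (B : Subring K) [IsDiscreteValuationRing B] [IsFractionRing B K]
    (v : AddValuation K (WithTop ℤ)) (hvB : ∀ x : K, 0 ≤ v x ↔ x ∈ B)
    (b : B) (p : Polynomial k) (hmonic : p.Monic)
    (hpb : Polynomial.eval₂ (algebraMap k K) (b : K) p = 0)
    (j : ℕ) (hj : j < p.natDegree)
    (hjmin : ∀ i < p.natDegree,
      v (algebraMap k K (p.coeff j)) ≤ v (algebraMap k K (p.coeff i))) :
    (0 ≤ v (algebraMap k K (p.coeff j)) →
      ∃ pA : Polynomial (capSubring (k := k) B),
        pA.map (capSubring (k := k) B).subtype = p ∧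
        pA.map (Ideal.Quotient.mk
          ((IsLocalRing.maximalIdeal B).comap (capHom (k := k) B))) ≠ 0 ∧
        Polynomial.eval₂
          (Ideal.quotientMap (IsLocalRing.maximalIdeal B) (capHom (k := k) B) le_rfl)
          (Ideal.Quotient.mk (IsLocalRing.maximalIdeal B) b)
          (pA.map (Ideal.Quotient.mk
            ((IsLocalRing.maximalIdeal B).comap (capHom (k := k) B)))) = 0) ∧
    (v (algebraMap k K (p.coeff j)) < 0 →
      ∃ pA : Polynomial (capSubring (k := k) B),
        pA.map (capSubring (k := k) B).subtype = Polynomial.C (p.coeff j)⁻¹ * p ∧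
        pA.map (Ideal.Quotient.mk
          ((IsLocalRing.maximalIdeal B).comap (capHom (k := k) B))) ≠ 0 ∧
        Polynomial.eval₂
          (Ideal.quotientMap (IsLocalRing.maximalIdeal B) (capHom (k := k) B) le_rfl)
          (Ideal.Quotient.mk (IsLocalRing.maximalIdeal B) b)
          (pA.map (Ideal.Quotient.mk
            ((IsLocalRing.maximalIdeal B).comap (capHom (k := k) B)))) = 0) := by
  -- v(r_j) ≤ v(r_i) for all i (including i ≥ natDegree, where v(r_j) ≤ v(1)=0 or v(0)=⊤
  -- only holds in the respective branches; handled below)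
  constructor
  · intro hv0
    refine aux_exists B p ?_ b hpb p.natDegree hmonic.coeff_natDegree
    intro i
    rw [← hvB]
    rcases lt_trichotomy i p.natDegree with h | h | h
    · exact le_trans hv0 (hjmin i h)
    · rw [h, hmonic.coeff_natDegree, map_one, v.map_one]
    · rw [Polynomial.coeff_eq_zero_of_natDegree_lt h, map_zero, v.map_zero]
      exact le_top
  · intro hvneg
    have hrj : p.coeff j ≠ 0 := by
      intro h
      rw [h, map_zero, v.map_zero] at hvneg
      exact (not_top_lt) hvneg
    have hjmin' : ∀ i, v (algebraMap k K (p.coeff j)) ≤ v (algebraMap k K (p.coeff i)) := by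
      intro i
      rcases lt_trichotomy i p.natDegree with h | h | h
      · exact hjmin i h
      · rw [h, hmonic.coeff_natDegree, map_one, v.map_one]
        exact le_of_lt hvneg
      · rw [Polynomial.coeff_eq_zero_of_natDegree_lt h, map_zero, v.map_zero]
        exact le_top
    refine aux_exists B (Polynomial.C (p.coeff j)⁻¹ * p) ?_ b ?_ j ?_
    · intro i
      rw [← hvB, Polynomial.coeff_C_mul, map_mul, v.map_mul, map_inv₀, v.map_inv]
      exact wt_aux _ _ (ne_top_of_lt hvneg) (hjmin' i)
    · rw [Polynomial.eval₂_mul_noncomm]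
      · rw [hpb, mul_zero]
      · intro n
        exact Commute.all _ _
    · rw [Polynomial.coeff_C_mul, inv_mul_cancel₀ hrj]
end
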